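/- Let G be a group, let N ≤ M be normal subgroups of G, and let W ≤ Z be subgroups of G satisfying N ⊓ W = N ⊓ Z and M ⊔ W = M ⊔ Z. Let K be a subgroup of G with N ≤ K ≤ M, with W ≤ N_G(K), and with (N ⊔ W) ⊓ M ≤ K ≤ (N ⊔ Z) ⊓ M. Then (N ⊔ ((W ⊔ K) ⊓ Z)) ⊓ M = K. -/

import Mathlib

open scoped Pointwise

lemma mem_sup_of_le_normalizer {G : Type*} [Group G] {W K : Subgroup G}
    (h : W ≤ Subgroup.normalizer (K : Set G)) {y : G} (hy : y ∈ W ⊔ K) :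
    ∃ w ∈ W, ∃ k ∈ K, w * k = y := by
  set P := Subgroup.normalizer (K : Set G) with hP
  have hKP : K ≤ P := Subgroup.le_normalizer
  have hWKP : W ⊔ K ≤ P := sup_le h hKP
  haveI : (K.subgroupOf P).Normal := Subgroup.normal_in_normalizer
  have hy' : (⟨y, hWKP hy⟩ : P) ∈ W.subgroupOf P ⊔ K.subgroupOf P := by
    rw [← Subgroup.subgroupOf_sup h hKP]
    exact hy
  rw [← SetLike.mem_coe, Subgroup.mul_normal] at hy'
  obtain ⟨w, hw, k, hk, heq⟩ := hy'
  exact ⟨(w : G), hw, (k : G), hk, congrArg Subtype.val heq⟩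

/-- Let `N ≤ M` be normal subgroups of `G`, and `W ≤ Z` subgroups with
`N ⊓ W = N ⊓ Z` and `M ⊔ W = M ⊔ Z`.  If `K` is a subgroup with `N ≤ K ≤ M`,
normalized by `W`, and `(N ⊔ W) ⊓ M ≤ K ≤ (N ⊔ Z) ⊓ M`, then `ρ(φ(K)) = K`,
where `ρ(H) = (N ⊔ H) ⊓ M` and `φ(K) = (W ⊔ K) ⊓ Z`. -/
theorem rho_phi_eq_self {G : Type*} [Group G]
    (N M : Subgroup G) (hN : N.Normal) (hM : M.Normal) (hNM : N ≤ M)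
    (W Z : Subgroup G) (hWZ : W ≤ Z)
    (hmeet : N ⊓ W = N ⊓ Z) (hjoin : M ⊔ W = M ⊔ Z)
    (K : Subgroup G) (hNK : N ≤ K) (hKM : K ≤ M)
    (hnorm : W ≤ Subgroup.normalizer (K : Set G))
    (hlow : (N ⊔ W) ⊓ M ≤ K) (hhigh : K ≤ (N ⊔ Z) ⊓ M) :
    (N ⊔ ((W ⊔ K) ⊓ Z)) ⊓ M = K := by
  apply le_antisymm
  · -- ≤ direction
    rintro x ⟨hx1, hxM⟩
    have hx1' : x ∈ (N : Set G) * (((W ⊔ K) ⊓ Z : Subgroup G) : Set G) := by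
      rw [← Subgroup.normal_mul]; exact hx1
    obtain ⟨n, hn, y, hy, rfl⟩ := hx1'
    have hyM : y ∈ M := by
      have : n⁻¹ * (n * y) ∈ M := mul_mem (inv_mem (hNM hn)) hxM
      simpa using this
    obtain ⟨hyWK, hyZ⟩ := hy
    obtain ⟨w, hw, k, hk, rfl⟩ := mem_sup_of_le_normalizer hnorm hyWK
    have hwM : w ∈ M := by
      have : w * k * k⁻¹ ∈ M := mul_mem hyM (inv_mem (hKM hk))
      simpa using this
    have hwK : w ∈ K := hlow ⟨Subgroup.mem_sup_right hw, hwM⟩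
    exact mul_mem (hNK hn) (mul_mem hwK hk)
  · -- ≥ direction
    intro k hk
    refine ⟨?_, hKM hk⟩
    have hkNZ : k ∈ N ⊔ Z := (hhigh hk).1
    have : k ∈ (N : Set G) * (Z : Set G) := by rw [← Subgroup.normal_mul]; exact hkNZ
    obtain ⟨n, hn, z, hz, rfl⟩ := this
    have hzK : z ∈ K := by
      have : n⁻¹ * (n * z) ∈ K := mul_mem (inv_mem (hNK hn)) hk
      simpa using this
    exact Subgroup.mul_mem_sup hn ⟨Subgroup.mem_sup_right hzK, hz⟩
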